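/- Let p be any prime, and let n, m, s, r be nonnegative integers with n ≥ m, s ≥ 1, 1 ≤ r ≤ p^s − 1, and p ∤ r. Then C(n·p^s, m·p^s + r) ≡ (−1)^(r−1) · r⁻¹ · (m+1) · C(n, m+1) · p^s (mod p^(s+1)), where r⁻¹ denotes the inverse of r modulo p. -/

import Mathlib

open Nat

-- C(p-1, t) = (-1)^t in ZMod p for t < p
lemma auxB0 (p : ℕ) [hp : Fact p.Prime] : ∀ t, t < p → ((Nat.choose (p-1) t : ZMod p) = (-1)^t) := by
  intro t
  induction t with
  | zero => intro _; simp
  | succ t ih =>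
    intro ht
    have ht' : t < p := lt_of_succ_lt ht
    have key := Nat.choose_succ_right_eq (p-1) t
    have hcast := congrArg (Nat.cast : ℕ → ZMod p) key
    push_cast at hcast
    have h1 : ((p - 1 - t : ℕ) : ZMod p) = -((t:ZMod p)+1) := by
      have h2 : (p - 1 - t) + (t + 1) = p := by omega
      have h3 := congrArg (Nat.cast : ℕ → ZMod p) h2
      push_cast at h3
      rw [ZMod.natCast_self] at h3
      linear_combination h3
    rw [h1, ih ht'] at hcast
    have hne : ((t:ZMod p)+1) ≠ 0 := by
      have : ¬ (p ∣ t+1) := by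
        intro hd
        exact absurd (Nat.le_of_dvd (Nat.succ_pos t) hd) (by omega)
      simpa [Nat.cast_add, Nat.cast_one] using
        (fun h => this ((ZMod.natCast_eq_zero_iff (t+1) p).mp (by push_cast at h ⊢; exact h)))
    apply mul_right_cancel₀ hne
    rw [hcast]
    ring

-- generalized Lucas: C(a p^s + b, c p^s + d) = C(a,c) C(b,d) mod p for b,d < p^s
lemma auxA (p : ℕ) [hp : Fact p.Prime] : ∀ s a b c d : ℕ, b < p^s → d < p^s →
    ((Nat.choose (a * p^s + b) (c * p^s + d) : ZMod p) = (Nat.choose a c) * (Nat.choose b d)) := by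
  intro s
  induction s with
  | zero => intro a b c d hb hd; simp only [pow_zero] at hb hd; interval_cases b <;> interval_cases d <;> simp
  | succ s ih =>
    intro a b c d hb hd
    have hp0 : 0 < p := hp.out.pos
    have L := Choose.choose_modEq_choose_mod_mul_choose_div (p := p)
      (n := a * p^(s+1) + b) (k := c * p^(s+1) + d)
    have L' := (ZMod.intCast_eq_intCast_iff _ _ _).mpr L
    push_cast at L'
    have e1 : (a * p^(s+1) + b) % p = b % p := by
      rw [pow_succ, ← mul_assoc, mul_comm (a * p^s) p, Nat.mul_add_mod]
    have e2 : (a * p^(s+1) + b) / p = a * p^s + b / p := by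
      rw [pow_succ, ← mul_assoc, mul_comm (a * p^s) p, Nat.mul_add_div hp0]
    have e3 : (c * p^(s+1) + d) % p = d % p := by
      rw [pow_succ, ← mul_assoc, mul_comm (c * p^s) p, Nat.mul_add_mod]
    have e4 : (c * p^(s+1) + d) / p = c * p^s + d / p := by
      rw [pow_succ, ← mul_assoc, mul_comm (c * p^s) p, Nat.mul_add_div hp0]
    rw [e1, e2, e3, e4] at L'
    have hbp : b / p < p ^ s := Nat.div_lt_of_lt_mul (by rw [← _root_.pow_succ']; exact hb)
    have hdp : d / p < p ^ s := Nat.div_lt_of_lt_mul (by rw [← _root_.pow_succ']; exact hd)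
    rw [ih a (b/p) c (d/p) hbp hdp] at L'
    -- now need C(b,d) = C(b%p, d%p) * C(b/p, d/p)
    have Lb := Choose.choose_modEq_choose_mod_mul_choose_div (p := p) (n := b) (k := d)
    have Lb' := (ZMod.intCast_eq_intCast_iff _ _ _).mpr Lb
    push_cast at Lb'
    rw [L', Lb']
    ring

-- C(p^s - 1, j) = (-1)^j in ZMod p for j < p^s
lemma auxB (p : ℕ) [hp : Fact p.Prime] : ∀ s j : ℕ, j < p^s →
    ((Nat.choose (p^s - 1) j : ZMod p) = (-1)^j) := by
  intro s
  induction s with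
  | zero => intro j hj; simp only [pow_zero] at hj; interval_cases j; simp
  | succ s ih =>
    intro j hj
    have hp0 : 0 < p := hp.out.pos
    have hp1 : 1 < p := hp.out.one_lt
    have hps : 1 ≤ p ^ s := Nat.one_le_pow _ _ hp0
    have hle : p ≤ p ^ s * p := Nat.le_mul_of_pos_left _ hps
    have e : p^(s+1) - 1 = (p^s - 1) * p + (p - 1) := by
      have h := Nat.sub_mul (p^s) 1 p
      rw [pow_succ]
      omega
    have L := Choose.choose_modEq_choose_mod_mul_choose_div (p := p)
      (n := p^(s+1) - 1) (k := j)
    have L' := (ZMod.intCast_eq_intCast_iff _ _ _).mpr L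
    push_cast at L'
    have e1 : (p^(s+1) - 1) % p = p - 1 := by
      rw [e, mul_comm (p^s - 1) p, Nat.mul_add_mod, Nat.mod_eq_of_lt (by omega)]
    have e2 : (p^(s+1) - 1) / p = p^s - 1 := by
      rw [e, mul_comm (p^s - 1) p, Nat.mul_add_div hp0, Nat.div_eq_of_lt (by omega), Nat.add_zero]
    have hjp : j / p < p ^ s := Nat.div_lt_of_lt_mul (by rw [← _root_.pow_succ']; exact hj)
    rw [e1, e2, auxB0 p (j % p) (Nat.mod_lt _ hp0), ih (j / p) hjp] at L'
    rw [L']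
    conv_rhs => rw [← Nat.div_add_mod j p]
    rw [pow_add, pow_mul, neg_one_pow_char (ZMod p) p]
    ring

theorem stmt0 (p n m s r : ℕ) (hp : p.Prime) (hmn : m ≤ n) (hs : 1 ≤ s)
    (hr1 : 1 ≤ r) (hr2 : r ≤ p ^ s - 1) (hpr : ¬ p ∣ r)
    (rinv : ℤ) (hinv : (r : ℤ) * rinv ≡ 1 [ZMOD (p : ℤ)]) :
    (((n * p ^ s).choose (m * p ^ s + r) : ℤ)) ≡
      (-1) ^ (r - 1) * rinv * (m + 1) * (n.choose (m + 1)) * (p : ℤ) ^ s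
      [ZMOD ((p : ℤ) ^ (s + 1))] := by
  haveI : Fact p.Prime := ⟨hp⟩
  have hp0 : 0 < p := hp.pos
  have hps : 1 ≤ p ^ s := Nat.one_le_pow _ _ hp0
  have hrps : r < p ^ s := by omega
  rcases Nat.eq_zero_or_pos n with hn | hn
  · subst hn
    have hm : m = 0 := Nat.le_zero.mp hmn
    subst hm
    rw [Nat.choose_eq_zero_of_lt (by simp; omega), Nat.choose_eq_zero_of_lt (by omega)]
    simp
  -- main case: n ≥ 1
  set N := n * p ^ s with hNdef
  set K := m * p ^ s + r with hKdef
  have hN1 : 1 ≤ N := Nat.mul_pos hn (Nat.pow_pos_iff.mpr (Or.inl hp0))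
  have hK1 : 1 ≤ K := by omega
  have hid := Nat.add_one_mul_choose_eq (N - 1) (K - 1)
  rw [Nat.sub_add_cancel hN1, Nat.sub_add_cancel hK1] at hid
  set A := N.choose K with hAdef
  set B := (N - 1).choose (K - 1) with hBdef
  -- Lucas computations
  have eN : N - 1 = (n - 1) * p ^ s + (p ^ s - 1) := by
    have h := Nat.sub_mul n 1 (p ^ s)
    have hle : p ^ s ≤ n * p ^ s := Nat.le_mul_of_pos_left _ hn
    omega
  have eK : K - 1 = m * p ^ s + (r - 1) := by omega
  have hB : ((B : ZMod p)) = ((n - 1).choose m : ZMod p) * (-1) ^ (r - 1) := by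
    rw [hBdef, eN, eK, auxA p s (n - 1) (p ^ s - 1) m (r - 1) (by omega) (by omega),
      auxB p s (r - 1) (by omega)]
  have hA0 : ((A : ZMod p)) = 0 := by
    have L := Choose.choose_modEq_choose_mod_mul_choose_div (p := p) (n := N) (k := K)
    have L' := (ZMod.intCast_eq_intCast_iff _ _ _).mpr L
    push_cast at L'
    have hpN : p ∣ N := Dvd.dvd.mul_left (dvd_pow_self p (by omega)) n
    have eNm : N % p = 0 := Nat.mod_eq_zero_of_dvd hpN
    have hpM : p ∣ m * p ^ s := Dvd.dvd.mul_left (dvd_pow_self p (by omega)) m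
    have eKm : K % p = r % p := by
      rw [hKdef, Nat.add_mod, Nat.mod_eq_zero_of_dvd hpM, Nat.zero_add,
        Nat.mod_mod_of_dvd r (dvd_refl p)]
    have hrm : 0 < r % p := by
      rcases Nat.eq_zero_or_pos (r % p) with h | h
      · exact absurd (Nat.dvd_of_mod_eq_zero h) hpr
      · exact h
    rw [eNm, eKm, Nat.choose_eq_zero_of_lt hrm] at L'
    simpa using L'
  -- pass to ℤ
  have hpA : (p : ℤ) ∣ (A : ℤ) :=
    Int.natCast_dvd_natCast.mpr ((ZMod.natCast_eq_zero_iff _ _).mp hA0)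
  obtain ⟨a1, ha1⟩ := hpA
  have hBc : ((B : ℤ)) ≡ (-1) ^ (r - 1) * ((n - 1).choose m : ℤ) [ZMOD (p : ℤ)] := by
    refine (ZMod.intCast_eq_intCast_iff _ _ _).mp ?_
    push_cast
    rw [hB]; ring
  obtain ⟨t, ht⟩ := hBc.symm.dvd   -- p ∣ B - c or c - B
  have hidZ : (N : ℤ) * (B : ℤ) = (A : ℤ) * (K : ℤ) := by exact_mod_cast hid
  set c : ℤ := (-1) ^ (r - 1) * ((n - 1).choose m : ℤ) with hcdef
  have hNc : (N : ℤ) = (n : ℤ) * (p : ℤ) ^ s := by push_cast [hNdef]; ring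
  have hKc : (K : ℤ) = (m : ℤ) * (p : ℤ) ^ s + r := by push_cast [hKdef]; ring
  have hid2 : (n : ℤ) * (p:ℤ)^s * (B : ℤ) = (A : ℤ) * ((m : ℤ) * (p:ℤ)^s + r) := by
    rw [← hNc, ← hKc]; exact hidZ
  have hstep4 : (p : ℤ) ^ (s + 1) ∣ (N : ℤ) * c - (r : ℤ) * (A : ℤ) := by
    refine ⟨(m : ℤ) * a1 - (n : ℤ) * t, ?_⟩
    rw [hNc]
    linear_combination hid2 - ((n : ℤ) * (p:ℤ)^s) * ht + ((m : ℤ) * (p:ℤ)^s) * ha1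
  -- p^s ∣ A
  have hpsA : (p : ℤ) ^ s ∣ (A : ℤ) := by
    have h1 : (p : ℤ) ^ s ∣ (r : ℤ) * (A : ℤ) := by
      have h2 : (p : ℤ) ^ s ∣ (N : ℤ) * c := by
        rw [hNc]; exact Dvd.dvd.mul_right (Dvd.dvd.mul_left dvd_rfl _) _
      have h3 : (p : ℤ) ^ s ∣ (N : ℤ) * c - (r : ℤ) * (A : ℤ) :=
        dvd_trans (pow_dvd_pow _ (by omega)) hstep4
      simpa using dvd_sub h2 h3
    have h1n : p ^ s ∣ r * A := by exact_mod_cast h1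
    have hcop : Nat.Coprime (p ^ s) r :=
      Nat.Coprime.pow_left s ((Nat.Prime.coprime_iff_not_dvd hp).mpr hpr)
    have := hcop.dvd_of_dvd_mul_left (by rwa [Nat.mul_comm] at h1n)
    exact_mod_cast this
  obtain ⟨v, hv⟩ := hpsA
  obtain ⟨w, hw⟩ := hstep4
  obtain ⟨u, hu⟩ := hinv.symm.dvd  -- p ∣ r * rinv - 1
  have hcombZ : ((m : ℤ) + 1) * (n.choose (m + 1) : ℤ) = (n : ℤ) * ((n - 1).choose m : ℤ) := by
    have h := Nat.add_one_mul_choose_eq (n - 1) m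
    rw [Nat.sub_add_cancel hn] at h
    have h' : (m + 1) * n.choose (m + 1) = n * (n - 1).choose m := by rw [h]; ring
    exact_mod_cast h'
  refine Int.modEq_iff_dvd.mpr ⟨rinv * w + u * v, ?_⟩
  linear_combination rinv * hw + (A : ℤ) * hu + ((p : ℤ) * u) * hv +
    ((-1 : ℤ)) ^ (r - 1) * rinv * (p : ℤ) ^ s * hcombZ - rinv * c * hNc +
    rinv * (n : ℤ) * (p : ℤ) ^ s * hcdef
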